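/- Let g > 0 and k₀ > 0, and set ω₀ = √(g k₀) and ω₂ = √(2 g k₀). Define c₁ˡ = k₀³ ω₀² / (4π ω₂ (2ω₀ + ω₂)), c₂ˡ = −k₀³ ω₀² / (4π ω₂ (2ω₀ − ω₂)), c₀ʳ = 3k₀²/(16π), c₁ʳ = (c₁ˡ/2)(3g/ω₀² + g/ω₂² − g/(ω₂(2ω₀ + ω₂)) − g/(ω₀(2ω₀ + ω₂))), and c₂ʳ = (c₂ˡ/2)(3g/ω₀² + g/ω₂² + g/(ω₂(2ω₀ − ω₂)) − g/(ω₀(2ω₀ − ω₂))). Then β := 8π (c₀ʳ − (c₁ʳ + c₂ʳ)/2) = 3 k₀². -/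

import Mathlib

open Real

/-- In the gravity water-wave limit, the coefficient `β` of the Dysthe equation
reduces to `3k₀²`. -/
theorem beta_gravity_limit (g k₀ : ℝ) (hg : 0 < g) (hk₀ : 0 < k₀)
    (ω₀ ω₂ : ℝ) (hω₀ : ω₀ = Real.sqrt (g * k₀)) (hω₂ : ω₂ = Real.sqrt (2 * g * k₀))
    (c₁l c₂l c₀r c₁r c₂r : ℝ)
    (hc₁l : c₁l = k₀ ^ 3 * ω₀ ^ 2 / (4 * π * ω₂ * (2 * ω₀ + ω₂)))
    (hc₂l : c₂l = -(k₀ ^ 3 * ω₀ ^ 2) / (4 * π * ω₂ * (2 * ω₀ - ω₂)))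
    (hc₀r : c₀r = 3 * k₀ ^ 2 / (16 * π))
    (hc₁r : c₁r = (c₁l / 2) *
      (3 * g / ω₀ ^ 2 + g / ω₂ ^ 2 - g / (ω₂ * (2 * ω₀ + ω₂)) - g / (ω₀ * (2 * ω₀ + ω₂))))
    (hc₂r : c₂r = (c₂l / 2) *
      (3 * g / ω₀ ^ 2 + g / ω₂ ^ 2 + g / (ω₂ * (2 * ω₀ - ω₂)) - g / (ω₀ * (2 * ω₀ - ω₂)))) :
    8 * π * (c₀r - (c₁r + c₂r) / 2) = 3 * k₀ ^ 2 := by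
  have hgk : (0:ℝ) < g * k₀ := mul_pos hg hk₀
  have eg : ω₀ ^ 2 = g * k₀ := by rw [hω₀, sq_sqrt hgk.le]
  have h2sq : ω₂ ^ 2 = 2 * (g * k₀) := by
    rw [hω₂, sq_sqrt (by linarith)]; ring
  have e2 : ω₂ ^ 2 = 2 * ω₀ ^ 2 := by rw [h2sq, eg]
  have h0pos : 0 < ω₀ := by rw [hω₀]; exact Real.sqrt_pos.mpr hgk
  have h2pos : 0 < ω₂ := by rw [hω₂]; exact Real.sqrt_pos.mpr (by linarith)
  have hdiff : 0 < 2 * ω₀ - ω₂ := by nlinarith [eg, h2sq]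
  have hπ : (0:ℝ) < π := Real.pi_pos
  subst hc₁r hc₂r hc₁l hc₂l hc₀r
  have hne : 2 * ω₀ - ω₂ ≠ 0 := hdiff.ne'
  have hne' : ω₀ * 2 - ω₂ ≠ 0 := by linarith
  field_simp
  linear_combination
    ((-384:ℝ) * ω₂^5 + (1536:ℝ) * ω₀^2 * ω₂^3 + (-1024:ℝ) * ω₀^4 * ω₂) * e2 +
    (128 * (((ω₀ * 2 + ω₂) * (3 * ω₂ ^ 2 + ω₀ ^ 2) - ω₀ ^ 2 * ω₂ - ω₀ * ω₂ ^ 2) * (ω₀ * 2 - ω₂) ^ 2 +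
      -((ω₀ * 2 + ω₂) ^ 2 * ((3 * ω₂ ^ 2 + ω₀ ^ 2) * (ω₀ * 2 - ω₂) + ω₀ ^ 2 * ω₂ - ω₀ * ω₂ ^ 2)))) * eg
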